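/- Let a', b' ∈ ℝ with a' < b', and let l', u' : [a', b'] → ℝ be continuous functions with l'(x) < u'(x) for all x ∈ (a', b'). Then the open sector X = {(x, y) ∈ ℝ² : a' < x < b', l'(x) < y < u'(x)} is locally boundary connected in ℝ². -/

import Mathlib

/-- A subset `X` of a topological space is *locally boundary connected* if every point of
the boundary `closure X \ X` has a base of neighbourhoods `N` such that `X ∩ N` is
connected. -/
def LocallyBoundaryConnected {α : Type*} [TopologicalSpace α] (X : Set α) : Prop :=
  ∀ p ∈ closure X \ X, ∀ U ∈ nhds p, ∃ N ∈ nhds p, N ⊆ U ∧ IsConnected (X ∩ N)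

/-- The open region between two continuous graphs over a nonempty preconnected base
is connected. -/
lemma region_isConnected (f g : ℝ → ℝ) (I : Set ℝ) (hI : IsPreconnected I)
    (hne : I.Nonempty) (hf : ContinuousOn f I) (hg : ContinuousOn g I)
    (hfg : ∀ x ∈ I, f x < g x) :
    IsConnected {q : ℝ × ℝ | q.1 ∈ I ∧ f q.1 < q.2 ∧ q.2 < g q.1} := by
  set Φ : ℝ × ℝ → ℝ × ℝ := fun q => (q.1, f q.1 + q.2 * (g q.1 - f q.1)) with hΦ
  have himg : Φ '' (I ×ˢ Set.Ioo (0:ℝ) 1) =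
      {q : ℝ × ℝ | q.1 ∈ I ∧ f q.1 < q.2 ∧ q.2 < g q.1} := by
    ext ⟨x, y⟩
    simp only [Set.mem_image, Set.mem_prod, Set.mem_Ioo, Set.mem_setOf_eq]
    constructor
    · rintro ⟨⟨a, t⟩, ⟨ha, ht0, ht1⟩, h⟩
      simp only [hΦ, Prod.mk.injEq] at h
      obtain ⟨h1, h2⟩ := h
      subst h1
      have ht0' : (0:ℝ) < t := ht0
      have ht1' : t < 1 := ht1
      have ha' : a ∈ I := ha
      have hgap : 0 < g a - f a := sub_pos.mpr (hfg a ha')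
      refine ⟨ha', ?_, ?_⟩
      · nlinarith [mul_pos ht0' hgap]
      · nlinarith [mul_pos (sub_pos.mpr ht1') hgap]
    · rintro ⟨hx, h1, h2⟩
      have hgap : 0 < g x - f x := by linarith
      refine ⟨(x, (y - f x) / (g x - f x)), ⟨hx, div_pos (by linarith) hgap,
        (div_lt_one hgap).mpr (by linarith)⟩, ?_⟩
      simp only [hΦ, Prod.mk.injEq]
      refine ⟨by trivial, ?_⟩
      rw [div_mul_cancel₀ _ (ne_of_gt hgap)]
      ring
  constructor
  · obtain ⟨x, hx⟩ := hne
    exact ⟨(x, (f x + g x) / 2), hx, by linarith [hfg x hx], by linarith [hfg x hx]⟩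
  · rw [← himg]
    apply (hI.prod isPreconnected_Ioo).image
    have hfc : ContinuousOn (fun q : ℝ × ℝ => f q.1) (I ×ˢ Set.Ioo (0:ℝ) 1) :=
      hf.comp continuousOn_fst (fun q hq => hq.1)
    have hgc : ContinuousOn (fun q : ℝ × ℝ => g q.1) (I ×ˢ Set.Ioo (0:ℝ) 1) :=
      hg.comp continuousOn_fst (fun q hq => hq.1)
    exact continuousOn_fst.prodMk (hfc.add (continuousOn_snd.mul (hgc.sub hfc)))

/-- for `a' < b'` and continuous `l', u' : [a', b'] → ℝ` with `l' < u'` on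
`(a', b')`, the open sector `{(x,y) : a' < x < b', l'(x) < y < u'(x)}` is locally
boundary connected in `ℝ²`. -/
theorem sector_locallyBoundaryConnected (a' b' : ℝ) (hab : a' < b')
    (l' u' : ℝ → ℝ)
    (hl : ContinuousOn l' (Set.Icc a' b')) (hu : ContinuousOn u' (Set.Icc a' b'))
    (hlu : ∀ x ∈ Set.Ioo a' b', l' x < u' x) :
    LocallyBoundaryConnected
      {q : ℝ × ℝ | q.1 ∈ Set.Ioo a' b' ∧ q.2 ∈ Set.Ioo (l' q.1) (u' q.1)} := by
  intro p hp U hU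
  obtain ⟨x0, y0⟩ := p
  obtain ⟨hpc, -⟩ := hp
  -- extend the bounds continuously to all of ℝ by clamping
  set c : ℝ → ℝ := fun x => min b' (max a' x) with hcdef
  have hcc : Continuous c := continuous_const.min (continuous_const.max continuous_id)
  have hmaps : ∀ x, c x ∈ Set.Icc a' b' :=
    fun x => ⟨le_min hab.le (le_max_left _ _), min_le_left _ _⟩
  set l : ℝ → ℝ := fun x => l' (c x) with hldef
  set u : ℝ → ℝ := fun x => u' (c x) with hudef
  have hlc : Continuous l := hl.comp_continuous hcc hmaps
  have huc : Continuous u := hu.comp_continuous hcc hmaps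
  have hceq : ∀ x ∈ Set.Ioo a' b', c x = x := by
    intro x hx
    simp only [hcdef]
    rw [max_eq_right hx.1.le, min_eq_right hx.2.le]
  have hleq : ∀ x ∈ Set.Ioo a' b', l x = l' x := by
    intro x hx; simp only [hldef]; rw [hceq x hx]
  have hueq : ∀ x ∈ Set.Ioo a' b', u x = u' x := by
    intro x hx; simp only [hudef]; rw [hceq x hx]
  -- the closure is contained in the closed region between the graphs
  have hXsub : {q : ℝ × ℝ | q.1 ∈ Set.Ioo a' b' ∧ q.2 ∈ Set.Ioo (l' q.1) (u' q.1)} ⊆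
      {q : ℝ × ℝ | q.1 ∈ Set.Icc a' b' ∧ l q.1 ≤ q.2 ∧ q.2 ≤ u q.1} := by
    rintro ⟨x, y⟩ ⟨hx, hy1, hy2⟩
    exact ⟨⟨hx.1.le, hx.2.le⟩, by rw [hleq x hx]; exact hy1.le,
      by rw [hueq x hx]; exact hy2.le⟩
  have hKclosed : IsClosed {q : ℝ × ℝ | q.1 ∈ Set.Icc a' b' ∧ l q.1 ≤ q.2 ∧ q.2 ≤ u q.1} :=
    (isClosed_Icc.preimage continuous_fst).inter
      ((isClosed_le (hlc.comp continuous_fst) continuous_snd).inter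
        (isClosed_le continuous_snd (huc.comp continuous_fst)))
  have hpK := closure_minimal hXsub hKclosed hpc
  obtain ⟨hx0, hly, hyu⟩ := hpK
  -- pick a metric ball inside U
  obtain ⟨ε, hε, hball⟩ := Metric.mem_nhds_iff.mp hU
  -- an open set of base points where the bounds stay in range
  have hVopen : IsOpen {x : ℝ | l x < y0 + ε ∧ y0 - ε < u x} :=
    (isOpen_lt hlc continuous_const).inter (isOpen_lt continuous_const huc)
  have hx0V : x0 ∈ {x : ℝ | l x < y0 + ε ∧ y0 - ε < u x} :=
    ⟨by linarith, by linarith⟩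
  obtain ⟨δ, hδ, hδV⟩ := Metric.isOpen_iff.mp hVopen x0 hx0V
  set δ' : ℝ := min δ ε with hδ'def
  have hδ' : 0 < δ' := lt_min hδ hε
  have hδ'δ : δ' ≤ δ := min_le_left _ _
  have hδ'ε : δ' ≤ ε := min_le_right _ _
  refine ⟨Set.Ioo (x0 - δ') (x0 + δ') ×ˢ Set.Ioo (y0 - ε) (y0 + ε), ?_, ?_, ?_⟩
  · exact (isOpen_Ioo.prod isOpen_Ioo).mem_nhds
      ⟨⟨by linarith, by linarith⟩, ⟨by linarith, by linarith⟩⟩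
  · have hsub : Set.Ioo (x0 - δ') (x0 + δ') ×ˢ Set.Ioo (y0 - ε) (y0 + ε) ⊆
        Metric.ball (x0, y0) ε := by
      rw [← ball_prod_same]
      refine Set.prod_mono ?_ ?_
      · rw [Real.ball_eq_Ioo]
        exact Set.Ioo_subset_Ioo (by linarith) (by linarith)
      · rw [Real.ball_eq_Ioo]
    exact fun q hq => hball (hsub hq)
  · -- the intersection is a region between two graphs
    have hXN : {q : ℝ × ℝ | q.1 ∈ Set.Ioo a' b' ∧ q.2 ∈ Set.Ioo (l' q.1) (u' q.1)} ∩
        Set.Ioo (x0 - δ') (x0 + δ') ×ˢ Set.Ioo (y0 - ε) (y0 + ε) =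
        {q : ℝ × ℝ | q.1 ∈ Set.Ioo (max (x0 - δ') a') (min (x0 + δ') b') ∧
          max (l q.1) (y0 - ε) < q.2 ∧ q.2 < min (u q.1) (y0 + ε)} := by
      ext ⟨x, y⟩
      simp only [Set.mem_inter_iff, Set.mem_setOf_eq, Set.mem_prod, Set.mem_Ioo]
      constructor
      · rintro ⟨⟨⟨ha, hb⟩, hy1, hy2⟩, ⟨hx1, hx2⟩, hy3, hy4⟩
        refine ⟨⟨max_lt hx1 ha, lt_min hx2 hb⟩, ?_, ?_⟩
        · exact max_lt (by rw [hleq x ⟨ha, hb⟩]; exact hy1) hy3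
        · exact lt_min (by rw [hueq x ⟨ha, hb⟩]; exact hy2) hy4
      · rintro ⟨⟨hA, hB⟩, hF, hG⟩
        have hx1 : x0 - δ' < x := lt_of_le_of_lt (le_max_left _ _) hA
        have ha : a' < x := lt_of_le_of_lt (le_max_right _ _) hA
        have hx2 : x < x0 + δ' := lt_of_lt_of_le hB (min_le_left _ _)
        have hb : x < b' := lt_of_lt_of_le hB (min_le_right _ _)
        have hy1 : l x < y := lt_of_le_of_lt (le_max_left _ _) hF
        have hy3 : y0 - ε < y := lt_of_le_of_lt (le_max_right _ _) hF
        have hy2 : y < u x := lt_of_lt_of_le hG (min_le_left _ _)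
        have hy4 : y < y0 + ε := lt_of_lt_of_le hG (min_le_right _ _)
        exact ⟨⟨⟨ha, hb⟩, by rw [← hleq x ⟨ha, hb⟩]; exact hy1,
          by rw [← hueq x ⟨ha, hb⟩]; exact hy2⟩, ⟨hx1, hx2⟩, hy3, hy4⟩
    rw [hXN]
    have hne : (Set.Ioo (max (x0 - δ') a') (min (x0 + δ') b')).Nonempty :=
      Set.nonempty_Ioo.mpr
        (max_lt (lt_min (by linarith) (by linarith [hx0.2]))
          (lt_min (by linarith [hx0.1]) hab))
    refine region_isConnected (fun x => max (l x) (y0 - ε)) (fun x => min (u x) (y0 + ε))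
      _ isPreconnected_Ioo hne (hlc.max continuous_const).continuousOn
      (huc.min continuous_const).continuousOn ?_
    intro x hx
    have ha : a' < x := lt_of_le_of_lt (le_max_right _ _) hx.1
    have hb : x < b' := lt_of_lt_of_le hx.2 (min_le_right _ _)
    have hx1 : x0 - δ' < x := lt_of_le_of_lt (le_max_left _ _) hx.1
    have hx2 : x < x0 + δ' := lt_of_lt_of_le hx.2 (min_le_left _ _)
    have hxV : x ∈ {x : ℝ | l x < y0 + ε ∧ y0 - ε < u x} := by
      apply hδV
      rw [Real.ball_eq_Ioo]
      exact ⟨by linarith, by linarith⟩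
    have hlux : l x < u x := by
      rw [hleq x ⟨ha, hb⟩, hueq x ⟨ha, hb⟩]
      exact hlu x ⟨ha, hb⟩
    exact max_lt (lt_min hlux hxV.1) (lt_min hxV.2 (by linarith))
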